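/- Let {W_i = span{e^i_j}_{j=1}^m}_{i=1}^n be the equichordal tight fusion frame constructed from a semiregular divisible difference set, and let U be the m×m unitary with (ℓ,j) entry (1/√m)η_j(h_ℓ), where {h_ℓ} are coset representatives of G/N. Define (ẽ^i_1 ... ẽ^i_m) = (e^i_1 ... e^i_m)U*. Then for each i, W_i = span{ẽ^i_j}_{j=1}^m, each ẽ^i_j is a unit vector whose nonzero entries all have modulus √m/√k, and each ẽ^i_j has exactly k/m nonzero entries. -/

import Mathlib

open Matrix in
/-- Sparse, almost flat version of the semiregular divisible difference set
construction: multiplying each block `Lᵢ` on the right by `U*` (with `U` built from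
the annihilator and coset representatives of `G/N`) preserves the column span, and
the new columns are unit vectors with exactly `k/m` nonzero entries, all of
modulus `√m/√k`. -/
theorem semiregular_dds_sparse {G : Type*} [AddCommGroup G] [Fintype G]
    [DecidableEq G] (m n k l1 l2 : ℕ) (hm : 0 < m) (hn : 0 < n) (hk : 0 < k)
    (N : AddSubgroup G) (hG : Fintype.card G = m * n) (hNcard : Nat.card N = n)
    (D : Finset G) (hD : D.card = k)
    (hdd2 : ∀ g : G, g ∉ N →
        ((D ×ˢ D).filter (fun p => p.1 ≠ p.2 ∧ p.1 - p.2 = g)).card = l2)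
    (hdd1 : ∀ g : G, g ∈ N → g ≠ 0 →
        ((D ×ˢ D).filter (fun p => p.1 ≠ p.2 ∧ p.1 - p.2 = g)).card = l1)
    (hsr1 : l1 < k) (hsr2 : k ^ 2 = l2 * (m * n))
    (η : Fin m ≃ {χ : AddChar G ℂ // ∀ h ∈ N, χ h = 1})
    (χ : Fin n → AddChar G ℂ)
    (hχ : ∀ ψ : AddChar G ℂ, ∃! i : Fin n, ∃ j : Fin m, ψ = χ i * (η j).1)
    (d : Fin k ≃ {x // x ∈ D})
    (E : Fin n → Matrix (Fin k) (Fin m) ℂ)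
    (hE : ∀ i t j, E i t j = ((Real.sqrt k : ℂ))⁻¹ * (χ i * (η j).1) ((d t : G)))
    (h : Fin m → G)
    (hrep : Function.Bijective fun ℓ => (QuotientAddGroup.mk (h ℓ) : G ⧸ N))
    (U : Matrix (Fin m) (Fin m) ℂ)
    (hU : ∀ ℓ j, U ℓ j = ((Real.sqrt m : ℂ))⁻¹ * (η j).1 (h ℓ))
    (Et : Fin n → Matrix (Fin k) (Fin m) ℂ)
    (hEt : ∀ i, Et i = E i * Uᴴ) :
    (∀ i, LinearMap.range (Et i).mulVecLin = LinearMap.range (E i).mulVecLin) ∧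
    (∀ i j, ∑ t, ‖Et i t j‖ ^ 2 = 1) ∧
    (∀ i j t, Et i t j ≠ 0 →
      ‖Et i t j‖ = Real.sqrt m / Real.sqrt k) ∧
    (∀ i j, (Finset.univ.filter fun t => Et i t j ≠ 0).card * m = k) := by
  classical
  -- basic nonvanishing facts
  have hne0 : ∀ (ψ : AddChar G ℂ) (x : G), ψ x ≠ 0 := by
    intro ψ x h0
    have h1 : ‖ψ x‖ = 1 := AddChar.norm_apply ψ x
    rw [h0] at h1
    simp at h1
  have hsqm : Real.sqrt m ≠ 0 := by
    refine ne_of_gt (Real.sqrt_pos.mpr ?_)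
    exact_mod_cast hm
  have hsqk : Real.sqrt k ≠ 0 := by
    refine ne_of_gt (Real.sqrt_pos.mpr ?_)
    exact_mod_cast hk
  have hmsq : Real.sqrt m * Real.sqrt m = (m : ℝ) := Real.mul_self_sqrt (Nat.cast_nonneg m)
  have hksq : Real.sqrt k * Real.sqrt k = (k : ℝ) := Real.mul_self_sqrt (Nat.cast_nonneg k)
  -- Step C : annihilator character sum
  have hmem_mul : ∀ (ψ : AddChar G ℂ), (∀ y ∈ N, ψ y = 1) →
      ∀ (φ : {χ : AddChar G ℂ // ∀ h ∈ N, χ h = 1}), ∀ y ∈ N, (ψ * φ.1) y = 1 := by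
    intro ψ hψ φ y hy
    rw [AddChar.mul_apply, hψ y hy, φ.2 y hy, mul_one]
  have Ssum : ∀ x : G, (∑ ℓ : Fin m, (η ℓ).1 x) = if x ∈ N then (m : ℂ) else 0 := by
    intro x
    by_cases hx : x ∈ N
    · rw [if_pos hx, Finset.sum_congr rfl (fun ℓ _ => (η ℓ).2 x hx)]
      simp
    · rw [if_neg hx]
      have hxq : (QuotientAddGroup.mk x : G ⧸ N) ≠ 0 := by
        simpa [QuotientAddGroup.eq_zero_iff] using hx
      obtain ⟨ψQ, hψQ⟩ := AddChar.exists_apply_ne_zero.2 hxq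
      set ψ : AddChar G ℂ := ψQ.compAddMonoidHom (QuotientAddGroup.mk' N) with hψdef
      have hψN : ∀ y ∈ N, ψ y = 1 := by
        intro y hy
        have h0 : ((QuotientAddGroup.mk' N) y : G ⧸ N) = 0 :=
          (QuotientAddGroup.eq_zero_iff y).2 hy
        simp [hψdef, h0]
      have hψx : ψ x ≠ 1 := hψQ
      set f : Fin m → Fin m :=
        fun ℓ => η.symm ⟨ψ * (η ℓ).1, hmem_mul ψ hψN (η ℓ)⟩ with hf
      have hfinj : Function.Injective f := by
        intro a b hab
        apply η.injective
        have h1 : (⟨ψ * (η a).1, hmem_mul ψ hψN (η a)⟩ :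
            {χ : AddChar G ℂ // ∀ h ∈ N, χ h = 1})
            = ⟨ψ * (η b).1, hmem_mul ψ hψN (η b)⟩ := η.symm.injective hab
        have h2 : ψ * (η a).1 = ψ * (η b).1 := congrArg Subtype.val h1
        refine Subtype.ext ?_
        ext y
        have h3 : (ψ * (η a).1) y = (ψ * (η b).1) y := by rw [h2]
        rw [AddChar.mul_apply, AddChar.mul_apply] at h3
        exact mul_left_cancel₀ (hne0 ψ y) h3
      have hbij : Function.Bijective f := Finite.injective_iff_bijective.mp hfinj
      have hsum : ∑ ℓ : Fin m, (η (f ℓ)).1 x = ∑ ℓ : Fin m, (η ℓ).1 x :=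
        Function.Bijective.sum_comp hbij (fun z => (η z).1 x)
      have hfℓ : ∀ ℓ, (η (f ℓ)).1 x = ψ x * (η ℓ).1 x := by
        intro ℓ
        rw [hf]
        simp only [Equiv.apply_symm_apply]
        exact AddChar.mul_apply ψ (η ℓ).1 x
      rw [Finset.sum_congr rfl (fun ℓ _ => hfℓ ℓ), ← Finset.mul_sum] at hsum
      have h4 : (ψ x - 1) * (∑ ℓ : Fin m, (η ℓ).1 x) = 0 := by
        rw [sub_mul, one_mul, hsum, sub_self]
      rcases mul_eq_zero.mp h4 with h5 | h5
      · exact absurd (sub_eq_zero.mp h5) hψx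
      · exact h5
  -- fibers of the difference map
  have fib0 : ((D ×ˢ D).filter (fun p => p.1 - p.2 = (0 : G))).card = k := by
    have himg : (D ×ˢ D).filter (fun p => p.1 - p.2 = (0 : G))
        = D.image (fun g => (g, g)) := by
      ext p
      simp only [Finset.mem_filter, Finset.mem_product, Finset.mem_image, sub_eq_zero]
      constructor
      · rintro ⟨⟨h1, h2⟩, h3⟩
        exact ⟨p.1, h1, by simp [Prod.ext_iff, h3]⟩
      · rintro ⟨g, hg, rfl⟩
        exact ⟨⟨hg, hg⟩, rfl⟩
    rw [himg, Finset.card_image_of_injective _ (fun a b hab => (Prod.mk.injEq _ _ _ _).mp hab |>.1), hD]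
  have fib : ∀ g : G, g ≠ 0 → ((D ×ˢ D).filter (fun p => p.1 - p.2 = g)).card
      = if g ∈ N then l1 else l2 := by
    intro g hg
    have heq : (D ×ˢ D).filter (fun p => p.1 - p.2 = g)
        = (D ×ˢ D).filter (fun p => p.1 ≠ p.2 ∧ p.1 - p.2 = g) := by
      apply Finset.filter_congr
      intro p _
      constructor
      · intro hpg
        refine ⟨?_, hpg⟩
        intro hne
        rw [hne, sub_self] at hpg
        exact hg hpg.symm
      · exact fun hp => hp.2
    rw [heq]
    by_cases hgN : g ∈ N
    · rw [if_pos hgN, hdd1 g hgN hg]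
    · rw [if_neg hgN, hdd2 g hgN]
  -- the distinguished finsets
  set Nf : Finset G := Finset.univ.filter (fun g : G => g ∈ N) with hNf
  set NE : Finset G := Nf.erase 0 with hNE
  set NC : Finset G := Finset.univ.filter (fun g : G => g ∉ N) with hNC
  have hNfcard : Nf.card = n := by
    rw [hNf, ← Fintype.card_subtype, ← Nat.card_eq_fintype_card]
    exact hNcard
  have h0Nf : (0 : G) ∈ Nf := by
    rw [hNf]
    simp [N.zero_mem]
  have hNEcard : NE.card = n - 1 := by
    rw [hNE, Finset.card_erase_of_mem h0Nf, hNfcard]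
  have hNCcard : NC.card = m * n - n := by
    have hsplit : Nf.card + NC.card = Fintype.card G := by
      rw [hNf, hNC]
      exact Finset.card_filter_add_card_filter_not _
    rw [hNfcard, hG] at hsplit
    omega
  -- weighted fiber sum
  have wsum : ∀ F : G → ℂ,
      ∑ g : G, (((D ×ˢ D).filter (fun p => p.1 - p.2 = g)).card : ℂ) * F g
        = (k : ℂ) * F 0 + (l1 : ℂ) * ∑ g ∈ NE, F g + (l2 : ℂ) * ∑ g ∈ NC, F g := by
    intro F
    have hsplit0 : ∑ g : G, (((D ×ˢ D).filter (fun p => p.1 - p.2 = g)).card : ℂ) * F g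
        = (((D ×ˢ D).filter (fun p => p.1 - p.2 = (0 : G))).card : ℂ) * F 0
          + ∑ g ∈ Finset.univ.erase 0,
              (((D ×ˢ D).filter (fun p => p.1 - p.2 = g)).card : ℂ) * F g :=
      (Finset.add_sum_erase _ _ (Finset.mem_univ 0)).symm
    have herase : ∀ g ∈ Finset.univ.erase (0 : G),
        (((D ×ˢ D).filter (fun p => p.1 - p.2 = g)).card : ℂ) * F g
          = (if g ∈ N then (l1 : ℂ) else (l2 : ℂ)) * F g := by
      intro g hg
      rw [fib g (Finset.ne_of_mem_erase hg)]
      split_ifs <;> simp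
    rw [hsplit0, Finset.sum_congr rfl herase]
    have h1 : (Finset.univ.erase (0:G)).filter (fun g => g ∈ N) = NE := by
      rw [hNE, hNf]
      ext g
      by_cases hg0 : g = 0
      · subst hg0
        simp
      · simp [hg0]
    have h2 : (Finset.univ.erase (0:G)).filter (fun g => g ∉ N) = NC := by
      rw [hNC]
      ext g
      by_cases hg0 : g = 0
      · subst hg0
        simp [N.zero_mem]
      · simp [hg0]
    simp only [ite_mul]
    rw [Finset.sum_ite, h1, h2, ← Finset.mul_sum, ← Finset.mul_sum, fib0]
    ring
  -- the key semiregularity identity, over ℂ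
  have key : (k : ℂ) + (l1 : ℂ) * ((n : ℂ) - 1) - (l2 : ℂ) * (n : ℂ) = 0 := by
    have hw := wsum (fun _ => 1)
    simp only [mul_one, Finset.sum_const, nsmul_eq_mul, hNEcard, hNCcard] at hw
    have hlhs : ∑ g : G, (((D ×ˢ D).filter (fun p => p.1 - p.2 = g)).card : ℂ)
        = ((k * k : ℕ) : ℂ) := by
      have hc : (D ×ˢ D).card = ∑ g : G,
          ((D ×ˢ D).filter (fun p => p.1 - p.2 = g)).card :=
        Finset.card_eq_sum_card_fiberwise (fun p _ => Finset.mem_univ (p.1 - p.2))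
      rw [← Nat.cast_sum]
      rw [← hc, Finset.card_product, hD]
    rw [hlhs] at hw
    have hkk : ((k * k : ℕ) : ℂ) = (l2 : ℂ) * ((m : ℂ) * (n : ℂ)) := by
      have h9 : (k : ℂ) ^ 2 = (l2 : ℂ) * ((m : ℂ) * (n : ℂ)) := by exact_mod_cast hsr2
      push_cast
      linear_combination h9
    have hn1 : ((n - 1 : ℕ) : ℂ) = (n : ℂ) - 1 := by
      have h9 : (1 : ℕ) ≤ n := hn
      push_cast [Nat.cast_sub h9]
      ring
    have hmn : ((m * n - n : ℕ) : ℂ) = (m : ℂ) * (n : ℂ) - (n : ℂ) := by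
      have hle : n ≤ m * n := Nat.le_mul_of_pos_left n hm
      push_cast [Nat.cast_sub hle]
      ring
    rw [hkk, hn1, hmn] at hw
    linear_combination -hw
  -- character sums over D vanish for nontrivial annihilator characters
  have charsum : ∀ ψ : AddChar G ℂ, ψ ≠ 0 → (∀ y ∈ N, ψ y = 1) →
      ∑ g ∈ D, ψ g = 0 := by
    intro ψ hψne hψN
    set S := ∑ g ∈ D, ψ g with hS
    have hconj : (starRingEnd ℂ) S = ∑ g ∈ D, ψ (-g) := by
      rw [hS, map_sum]
      exact Finset.sum_congr rfl fun g _ => (ψ.map_neg_eq_conj g).symm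
    have hprod : S * (starRingEnd ℂ) S = ∑ p ∈ D ×ˢ D, ψ (p.1 - p.2) := by
      rw [hconj, hS, Finset.sum_mul_sum, Finset.sum_product]
      exact Finset.sum_congr rfl fun a _ => Finset.sum_congr rfl fun b _ => by
        rw [← AddChar.map_add_eq_mul, sub_eq_add_neg]
    have hfiber : ∑ p ∈ D ×ˢ D, ψ (p.1 - p.2)
        = ∑ g : G, (((D ×ˢ D).filter (fun p => p.1 - p.2 = g)).card : ℂ) * ψ g := by
      rw [← Finset.sum_fiberwise_of_maps_to (g := fun p : G × G => p.1 - p.2)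
        (fun p _ => Finset.mem_univ (p.1 - p.2)) (fun p : G × G => ψ (p.1 - p.2))]
      refine Finset.sum_congr rfl fun g _ => ?_
      rw [Finset.sum_congr rfl (fun p hp => by rw [(Finset.mem_filter.mp hp).2]),
        Finset.sum_const, nsmul_eq_mul]
    have hNfsum : ∑ g ∈ Nf, ψ g = (n : ℂ) := by
      rw [Finset.sum_congr rfl (fun g hg => hψN g (by
        rw [hNf] at hg
        exact (Finset.mem_filter.mp hg).2))]
      rw [Finset.sum_const, hNfcard, nsmul_eq_mul, mul_one]
    have hNEsum : ∑ g ∈ NE, ψ g = (n : ℂ) - 1 := by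
      have h9 := Finset.add_sum_erase Nf ψ h0Nf
      rw [hNfsum, AddChar.map_zero_eq_one, ← hNE] at h9
      linear_combination h9
    have hNCsum : ∑ g ∈ NC, ψ g = -(n : ℂ) := by
      have htot : ∑ g ∈ Nf, ψ g + ∑ g ∈ NC, ψ g = ∑ g : G, ψ g := by
        rw [hNf, hNC]
        exact Finset.sum_filter_add_sum_filter_not _ _ _
      have hzero : ∑ g : G, ψ g = 0 := AddChar.sum_eq_zero_iff_ne_zero.mpr hψne
      rw [hzero, hNfsum] at htot
      linear_combination htot
    have hfin : S * (starRingEnd ℂ) S = 0 := by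
      rw [hprod, hfiber, wsum ψ, AddChar.map_zero_eq_one, hNEsum, hNCsum]
      linear_combination key
    rcases mul_eq_zero.mp hfin with h5 | h5
    · exact h5
    · exact star_eq_zero.mp h5
  -- coset counts
  have hcount : ∀ j0 : Fin m,
      ((Finset.univ.filter (fun t : Fin k => ((d t : G) - h j0) ∈ N)).card) * m = k := by
    intro j0
    set c := (Finset.univ.filter (fun t : Fin k => ((d t : G) - h j0) ∈ N)).card with hc
    have hT1 : ∑ t : Fin k, ∑ ℓ : Fin m, (η ℓ).1 ((d t : G) - h j0) = (c : ℂ) * (m : ℂ) := by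
      rw [Finset.sum_congr rfl (fun t _ => Ssum ((d t : G) - h j0))]
      rw [Finset.sum_ite, Finset.sum_const, Finset.sum_const, smul_zero, add_zero,
        nsmul_eq_mul, hc]
    have hT2 : ∑ t : Fin k, ∑ ℓ : Fin m, (η ℓ).1 ((d t : G) - h j0) = (k : ℂ) := by
      rw [Finset.sum_comm]
      set ℓ0 : Fin m := η.symm ⟨0, fun y _ => rfl⟩ with hℓ0
      have hterm : ∀ ℓ : Fin m, ∑ t : Fin k, (η ℓ).1 ((d t : G) - h j0)
          = (∑ g ∈ D, (η ℓ).1 g) * (η ℓ).1 (-(h j0)) := by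
        intro ℓ
        rw [Finset.sum_mul]
        have hDsum : ∑ g ∈ D, (η ℓ).1 g * (η ℓ).1 (-(h j0))
            = ∑ t : Fin k, (η ℓ).1 ((d t : G)) * (η ℓ).1 (-(h j0)) := by
          rw [← Finset.sum_coe_sort D (fun g => (η ℓ).1 g * (η ℓ).1 (-(h j0)))]
          exact (Equiv.sum_comp d (fun x : {x // x ∈ D} =>
            (η ℓ).1 (x : G) * (η ℓ).1 (-(h j0)))).symm
        rw [hDsum]
        refine Finset.sum_congr rfl fun t _ => ?_
        rw [← AddChar.map_add_eq_mul, sub_eq_add_neg]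
      rw [Finset.sum_congr rfl (fun ℓ _ => hterm ℓ)]
      rw [Finset.sum_eq_single ℓ0]
      · have hη0 : (η ℓ0).1 = (0 : AddChar G ℂ) := by
          rw [hℓ0, Equiv.apply_symm_apply]
        rw [hη0]
        simp only [AddChar.zero_apply]
        rw [Finset.sum_const, hD, nsmul_eq_mul, mul_one, mul_one]
      · intro ℓ _ hℓ
        have hηℓ : (η ℓ).1 ≠ (0 : AddChar G ℂ) := by
          intro h0
          apply hℓ
          apply η.injective
          rw [hℓ0, Equiv.apply_symm_apply]
          exact Subtype.ext h0
        rw [charsum (η ℓ).1 hηℓ (η ℓ).2, zero_mul]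
      · intro habs
        exact absurd (Finset.mem_univ ℓ0) habs
    have hck : (c : ℂ) * (m : ℂ) = (k : ℂ) := by rw [← hT1, hT2]
    exact_mod_cast hck
  -- the coefficient
  have hcoef : ((Real.sqrt k : ℂ))⁻¹ * ((Real.sqrt m : ℂ))⁻¹ * (m : ℂ)
      = ((Real.sqrt m / Real.sqrt k : ℝ) : ℂ) := by
    have hmsqC : ((Real.sqrt m : ℝ) : ℂ) * ((Real.sqrt m : ℝ) : ℂ) = (m : ℂ) := by
      rw [← Complex.ofReal_mul, hmsq]
      push_cast
      ring
    rw [← hmsqC, Complex.ofReal_div]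
    have hsqmC : ((Real.sqrt m : ℝ) : ℂ) ≠ 0 := Complex.ofReal_ne_zero.mpr hsqm
    have hsqkC : ((Real.sqrt k : ℝ) : ℂ) ≠ 0 := Complex.ofReal_ne_zero.mpr hsqk
    field_simp
  have hcoefne : ((Real.sqrt m / Real.sqrt k : ℝ) : ℂ) ≠ 0 := by
    rw [Complex.ofReal_ne_zero]
    exact div_ne_zero hsqm hsqk
  -- the entry formula
  have hEt' : ∀ i t j0, Et i t j0 = if ((d t : G) - h j0) ∈ N
      then ((Real.sqrt m / Real.sqrt k : ℝ) : ℂ) * (χ i) ((d t : G)) else 0 := by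
    intro i t j0
    rw [hEt i, Matrix.mul_apply]
    have hterm : ∀ ℓ, E i t ℓ * Uᴴ ℓ j0
        = ((Real.sqrt k : ℂ))⁻¹ * ((Real.sqrt m : ℂ))⁻¹ * ((χ i) ((d t : G)))
          * (η ℓ).1 ((d t : G) - h j0) := by
      intro ℓ
      rw [Matrix.conjTranspose_apply, hE, hU, Complex.star_def, _root_.map_mul, map_inv₀, Complex.conj_ofReal,
        ← AddChar.map_neg_eq_conj, AddChar.mul_apply, sub_eq_add_neg,
        AddChar.map_add_eq_mul]
      ring
    rw [Finset.sum_congr rfl (fun ℓ _ => hterm ℓ), ← Finset.mul_sum, Ssum]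
    by_cases hP : ((d t : G) - h j0) ∈ N
    · rw [if_pos hP, if_pos hP, ← hcoef]
      ring
    · rw [if_neg hP, if_neg hP, mul_zero]
  have hEtne : ∀ i t j0, Et i t j0 ≠ 0 ↔ ((d t : G) - h j0) ∈ N := by
    intro i t j0
    rw [hEt' i t j0]
    constructor
    · intro hne
      by_contra hP
      rw [if_neg hP] at hne
      exact hne rfl
    · intro hP
      rw [if_pos hP]
      exact mul_ne_zero hcoefne (hne0 (χ i) _)
  refine ⟨?_, ?_, ?_, ?_⟩
  · -- ranges agree
    have hUU : U * Uᴴ = 1 := by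
      ext a b
      rw [Matrix.mul_apply]
      have hterm : ∀ j0 : Fin m, U a j0 * Uᴴ j0 b
          = ((Real.sqrt m : ℂ))⁻¹ * ((Real.sqrt m : ℂ))⁻¹ * (η j0).1 (h a - h b) := by
        intro j0
        rw [Matrix.conjTranspose_apply, hU, hU, Complex.star_def, _root_.map_mul, map_inv₀, Complex.conj_ofReal,
          ← AddChar.map_neg_eq_conj, sub_eq_add_neg, AddChar.map_add_eq_mul]
        ring
      rw [Finset.sum_congr rfl (fun j0 _ => hterm j0), ← Finset.mul_sum, Ssum]
      by_cases hab : a = b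
      · subst hab
        rw [if_pos (by rw [sub_self]; exact N.zero_mem), Matrix.one_apply_eq]
        have hmsqC : ((Real.sqrt m : ℝ) : ℂ) * ((Real.sqrt m : ℝ) : ℂ) = (m : ℂ) := by
          rw [← Complex.ofReal_mul, hmsq]
          push_cast
          ring
        rw [← hmsqC]
        have hsqmC : ((Real.sqrt m : ℝ) : ℂ) ≠ 0 := Complex.ofReal_ne_zero.mpr hsqm
        field_simp
      · have hP : h a - h b ∉ N := by
          intro hmem
          exact hab (hrep.injective ((QuotientAddGroup.eq_iff_sub_mem).mpr hmem))
        rw [if_neg hP, Matrix.one_apply_ne hab, mul_zero]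
    have hUU' : Uᴴ * U = 1 := mul_eq_one_comm.mp hUU
    have hsurj : Function.Surjective (Uᴴ.mulVecLin) := by
      intro v
      refine ⟨U.mulVec v, ?_⟩
      rw [Matrix.mulVecLin_apply, Matrix.mulVec_mulVec, hUU', Matrix.one_mulVec]
    intro i
    rw [hEt i, Matrix.mulVecLin_mul]
    exact LinearMap.range_comp_of_range_eq_top _ (LinearMap.range_eq_top.mpr hsurj)
  · -- unit norm columns
    intro i j0
    have hterm : ∀ t, ‖Et i t j0‖ ^ 2
        = if ((d t : G) - h j0) ∈ N then (m : ℝ) / (k : ℝ) else 0 := by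
      intro t
      rw [hEt' i t j0]
      by_cases hP : ((d t : G) - h j0) ∈ N
      · rw [if_pos hP, if_pos hP, norm_mul, Complex.norm_real, AddChar.norm_apply,
          mul_one, Real.norm_eq_abs, abs_of_nonneg
            (div_nonneg (Real.sqrt_nonneg _) (Real.sqrt_nonneg _)), div_pow, sq, sq,
          hmsq, hksq]
      · rw [if_neg hP, if_neg hP, norm_zero]
        norm_num
    rw [Finset.sum_congr rfl (fun t _ => hterm t), Finset.sum_ite, Finset.sum_const,
      Finset.sum_const, smul_zero, add_zero, nsmul_eq_mul]
    have hck := hcount j0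
    have hckR : ((Finset.univ.filter (fun t : Fin k => ((d t : G) - h j0) ∈ N)).card : ℝ)
        * (m : ℝ) = (k : ℝ) := by exact_mod_cast hck
    have hkR : (k : ℝ) ≠ 0 := by
      exact_mod_cast hk.ne'
    field_simp
    linarith [hckR]
  · -- moduli of nonzero entries
    intro i j0 t hne
    rw [hEt' i t j0] at hne ⊢
    by_cases hP : ((d t : G) - h j0) ∈ N
    · rw [if_pos hP, norm_mul, Complex.norm_real, Real.norm_eq_abs, abs_of_nonneg
        (div_nonneg (Real.sqrt_nonneg _) (Real.sqrt_nonneg _)),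
        AddChar.norm_apply, mul_one]
    · rw [if_neg hP] at hne
      exact absurd rfl hne
  · -- number of nonzero entries
    intro i j0
    have hfe : (Finset.univ.filter fun t => Et i t j0 ≠ 0)
        = Finset.univ.filter (fun t : Fin k => ((d t : G) - h j0) ∈ N) := by
      apply Finset.filter_congr
      intro t _
      exact hEtne i t j0
    rw [hfe]
    exact hcount j0
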